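/- For m = 3, the 3-percolation number of the grid P₃ □ P₃ equals 5, and the unique minimum 3-percolating set avoiding three consecutive boundary vertices consists of the four corner vertices together with the center vertex. -/
import Mathlib


open SimpleGraph

/-- The set of vertices eventually infected in `r`-neighbor bootstrap percolation
on the graph `G`, starting from the initially infected set `A`. -/
inductive Infected {V : Type*} (G : SimpleGraph V) (r : ℕ) (A : Set V) : V → Prop
  | init {v : V} : v ∈ A → Infected G r A v
  | step {v : V} (T : Finset V) : r ≤ T.card → (∀ u ∈ T, G.Adj u v) →
      (∀ u ∈ T, Infected G r A u) → Infected G r A v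

/-- `A` is an `r`-percolating set of `G`. -/
def Percolates {V : Type*} (G : SimpleGraph V) (r : ℕ) (A : Set V) : Prop :=
  ∀ v, Infected G r A v

/-- The `r`-percolation number of `G`: minimum size of an `r`-percolating set. -/
noncomputable def percNum (V : Type*) [Fintype V] (G : SimpleGraph V) (r : ℕ) : ℕ :=
  sInf {k | ∃ A : Finset V, A.card = k ∧ Percolates G r (↑A)}

/-- The `n × m` grid graph `Pₙ □ Pₘ`. -/
def gridGraph (n m : ℕ) : SimpleGraph (Fin n × Fin m) :=
  (pathGraph n) □ (pathGraph m)

/-- A boundary vertex of a grid: degree at most 3. -/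
def IsBoundary {V : Type*} (G : SimpleGraph V) (v : V) : Prop :=
  (G.neighborSet v).ncard ≤ 3

namespace Stmt19Aux

open Finset

abbrev V9 := Fin 3 × Fin 3

def adjP (u v : V9) : Prop :=
  ((u.1.val + 1 = v.1.val ∨ v.1.val + 1 = u.1.val) ∧ u.2 = v.2) ∨
  ((u.2.val + 1 = v.2.val ∨ v.2.val + 1 = u.2.val) ∧ u.1 = v.1)

instance decAdjP : ∀ u v : V9, Decidable (adjP u v) := fun _ _ => by
  unfold adjP; infer_instance

lemma adj_eq : (gridGraph 3 3).Adj = adjP := by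
  funext u v
  simp only [gridGraph, boxProd_adj, pathGraph_adj, adjP, eq_iff_iff]

def nbrs : V9 → Finset V9
  | (0,0) => {(0,1),(1,0)}
  | (0,1) => {(0,0),(0,2),(1,1)}
  | (0,2) => {(0,1),(1,2)}
  | (1,0) => {(0,0),(1,1),(2,0)}
  | (1,1) => {(0,1),(1,0),(1,2),(2,1)}
  | (1,2) => {(0,2),(1,1),(2,2)}
  | (2,0) => {(1,0),(2,1)}
  | (2,1) => {(2,0),(1,1),(2,2)}
  | (2,2) => {(1,2),(2,1)}

lemma nbrs_iff : ∀ v u : V9, u ∈ nbrs v ↔ adjP u v := by decide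

lemma adjP_comm : ∀ u v : V9, adjP u v ↔ adjP v u := by decide

def stepF (A : Finset V9) : Finset V9 :=
  A ∪ univ.filter (fun v => 3 ≤ ((nbrs v).filter (· ∈ A)).card)

def closF (A : Finset V9) : Finset V9 := stepF^[6] A

lemma subset_stepF (A : Finset V9) : A ⊆ stepF A := subset_union_left

lemma subset_iter (n : ℕ) (A : Finset V9) : A ⊆ stepF^[n] A := by
  induction n with
  | zero => simp
  | succ n ih =>
    rw [Function.iterate_succ_apply']
    exact ih.trans (subset_stepF _)

lemma infected_of_iter (n : ℕ) (A : Finset V9) (v : V9)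
    (hv : v ∈ stepF^[n] A) : Infected (gridGraph 3 3) 3 (↑A) v := by
  induction n generalizing v with
  | zero => exact Infected.init (by simpa using hv)
  | succ n ih =>
    rw [Function.iterate_succ_apply'] at hv
    rcases Finset.mem_union.1 hv with h | h
    · exact ih v h
    · rw [Finset.mem_filter] at h
      refine Infected.step ((nbrs v).filter (· ∈ stepF^[n] A)) h.2 ?_ ?_
      · intro u hu
        rw [Finset.mem_filter] at hu
        rw [adj_eq]
        exact (nbrs_iff v u).1 hu.1
      · intro u hu
        rw [Finset.mem_filter] at hu
        exact ih u hu.2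

lemma mem_of_infected (A B : Finset V9) (hAB : A ⊆ B) (hB : stepF B = B)
    (v : V9) (hv : Infected (gridGraph 3 3) 3 (↑A) v) : v ∈ B := by
  induction hv with
  | init h => exact hAB (by simpa using h)
  | @step v T hcard hadj _ ih =>
    rw [← hB]
    refine Finset.mem_union_right _ (Finset.mem_filter.2 ⟨Finset.mem_univ _, ?_⟩)
    refine hcard.trans (Finset.card_le_card ?_)
    intro u hu
    refine Finset.mem_filter.2 ⟨(nbrs_iff v u).2 ?_, by simpa using ih u hu⟩
    rw [← adj_eq]; exact hadj u hu

lemma perc_closF (A : Finset V9) (hfix : stepF (closF A) = closF A)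
    (hperc : Percolates (gridGraph 3 3) 3 (↑A)) : closF A = univ := by
  apply Finset.eq_univ_of_forall
  intro v
  exact mem_of_infected A (closF A) (subset_iter 6 A) hfix v (hperc v)

def S₀ : Finset V9 := {(0, 0), (0, 2), (2, 0), (2, 2), (1, 1)}

lemma hS₀ : S₀.card = 5 ∧ closF S₀ = univ := by decide

lemma infected_of_closF (A : Finset V9) (v : V9) (h : v ∈ closF A) :
    Infected (gridGraph 3 3) 3 (↑A) v := infected_of_iter 6 A v h

lemma percS₀ : Percolates (gridGraph 3 3) 3 (↑S₀) := by
  intro v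
  exact infected_of_closF S₀ v (hS₀.2 ▸ Finset.mem_univ v)

set_option maxRecDepth 100000 in
set_option maxHeartbeats 4000000 in
lemma small_not_perc : ∀ A : Finset V9, A.card ≤ 4 →
    (stepF (closF A) = closF A ∧ closF A ≠ univ) := by decide

set_option maxRecDepth 100000 in
set_option maxHeartbeats 4000000 in
lemma uniq5 : ∀ S : Finset V9, S.card = 5 →
    (stepF (closF S) = closF S ∧ (closF S = univ →
      (∃ u ∈ S, ∃ v ∈ S, ∃ z ∈ S, adjP u v ∧ adjP v z ∧ u ≠ z ∧
        u ≠ ((1 : Fin 3), (1 : Fin 3)) ∧ v ≠ ((1 : Fin 3), (1 : Fin 3)) ∧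
        z ≠ ((1 : Fin 3), (1 : Fin 3))) ∨ S = S₀)) := by decide

lemma boundary_iff : ∀ v : V9, IsBoundary (gridGraph 3 3) v ↔ v ≠ ((1 : Fin 3), (1 : Fin 3)) := by
  have hset : ∀ v : V9, (gridGraph 3 3).neighborSet v = ↑(nbrs v) := by
    intro v
    ext u
    simp only [mem_neighborSet, adj_eq, Finset.coe_sort_coe, Finset.mem_coe]
    rw [nbrs_iff, adjP_comm]
  intro v
  unfold IsBoundary
  rw [hset, Set.ncard_coe_finset]
  revert v
  decide

end Stmt19Aux

open Stmt19Aux in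
theorem stmt_19 :
    percNum (Fin 3 × Fin 3) (gridGraph 3 3) 3 = 5 ∧
    ∀ S : Finset (Fin 3 × Fin 3),
      S.card = 5 → Percolates (gridGraph 3 3) 3 (↑S) →
      (¬ ∃ u v z, u ∈ S ∧ v ∈ S ∧ z ∈ S ∧
      (gridGraph 3 3).Adj u v ∧ (gridGraph 3 3).Adj v z ∧ u ≠ z ∧
      IsBoundary (gridGraph 3 3) u ∧ IsBoundary (gridGraph 3 3) v ∧
      IsBoundary (gridGraph 3 3) z) →
      S = {(0, 0), (0, 2), (2, 0), (2, 2), (1, 1)} := by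
  constructor
  · unfold percNum
    apply le_antisymm
    · exact Nat.sInf_le ⟨S₀, hS₀.1, percS₀⟩
    · have hne : {k | ∃ A : Finset V9, A.card = k ∧ Percolates (gridGraph 3 3) 3 (↑A)}.Nonempty :=
        ⟨5, ⟨S₀, hS₀.1, percS₀⟩⟩
      apply le_csInf hne
      rintro k ⟨A, hcard, hperc⟩
      by_contra hk
      push_neg at hk
      have h4 : A.card ≤ 4 := by omega
      obtain ⟨hfix, hne⟩ := small_not_perc A h4
      exact hne (perc_closF A hfix hperc)
  · intro S hcard hperc hno
    obtain ⟨hfix, himp⟩ := uniq5 S hcard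
    rcases himp (perc_closF S hfix hperc) with hbad | hS
    · exfalso
      obtain ⟨u, hu, v, hv, z, hz, huv, hvz, huz, hu1, hv1, hz1⟩ := hbad
      exact hno ⟨u, v, z, hu, hv, hz, adj_eq ▸ huv, adj_eq ▸ hvz, huz,
        (boundary_iff u).2 hu1, (boundary_iff v).2 hv1, (boundary_iff z).2 hz1⟩
    · exact hS
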